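/- Let n, k be natural numbers with k ≥ 1, and let κ, μ : Fin n → ℝ satisfy κ_α · κ_β = μ_α · μ_β for all indices α ≠ β. If σ_{2k+1}(κ) = σ_{2k+1}(μ) and σ_{2k+1}(κ) ≠ 0, then κ = μ; in particular σ_{2l+1}(κ) = σ_{2l+1}(μ) for every natural number l. -/

import Mathlib

/-- The `m`-th elementary symmetric function of the family `κ : Fin n → ℝ`:
the sum over all `m`-element subsets `S` of `Fin n` of `∏ i ∈ S, κ i`. -/
noncomputable def esymmFun (n m : ℕ) (κ : Fin n → ℝ) : ℝ :=
  ∑ S ∈ Finset.powersetCard m (Finset.univ : Finset (Fin n)), ∏ i ∈ S, κ i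

theorem stmt_6 (n k : ℕ) (hk : 1 ≤ k) (κ μ : Fin n → ℝ)
    (h : ∀ α β : Fin n, α ≠ β → κ α * κ β = μ α * μ β)
    (heq : esymmFun n (2 * k + 1) κ = esymmFun n (2 * k + 1) μ)
    (hne : esymmFun n (2 * k + 1) κ ≠ 0) :
    κ = μ ∧ ∀ l : ℕ, esymmFun n (2 * l + 1) κ = esymmFun n (2 * l + 1) μ := by
  -- find a 3-element set of indices where κ is nonzero
  obtain ⟨S, hS, hSprod⟩ := Finset.exists_ne_zero_of_sum_ne_zero hne
  rw [Finset.mem_powersetCard] at hS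
  have hScard : 3 ≤ S.card := by omega
  obtain ⟨T, hTS, hT3⟩ := Finset.exists_subset_card_eq hScard
  obtain ⟨a, b, c, hab, hac, hbc, hTabc⟩ := Finset.card_eq_three.mp hT3
  have hκ : ∀ i ∈ S, κ i ≠ 0 := Finset.prod_ne_zero_iff.mp hSprod
  have ha : κ a ≠ 0 := hκ a (hTS (by simp [hTabc]))
  have hb : κ b ≠ 0 := hκ b (hTS (by simp [hTabc]))
  have hc : κ c ≠ 0 := hκ c (hTS (by simp [hTabc]))
  -- μ a ^ 2 = κ a ^ 2
  have hbc' : κ b * κ c ≠ 0 := mul_ne_zero hb hc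
  have hsq : μ a ^ 2 = κ a ^ 2 := by
    have h1 := h a b hab
    have h2 := h a c hac
    have h3 := h b c hbc
    have e : (κ a * κ b) * (κ a * κ c) = (μ a * μ b) * (μ a * μ c) := by rw [h1, h2]
    have : μ a ^ 2 * (κ b * κ c) = κ a ^ 2 * (κ b * κ c) := by
      linear_combination -e + μ a ^ 2 * h3
    exact mul_right_cancel₀ hbc' this
  have hμa : μ a ≠ 0 := by
    intro h0
    apply ha
    have : κ a ^ 2 = 0 := by rw [← hsq, h0]; ring
    exact pow_eq_zero_iff (by norm_num) |>.mp this
  set ε : ℝ := μ a / κ a with hε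
  have hε2 : ε ^ 2 = 1 := by rw [hε]; field_simp; linarith [hsq]
  have hεne : ε ≠ 0 := div_ne_zero hμa ha
  have hμ : ∀ i, μ i = ε * κ i := by
    intro i
    by_cases hi : i = a
    · subst hi; rw [hε]; field_simp
    · have h1 := h a i (Ne.symm hi)
      have hκμa : κ a = ε * μ a := by
        have : κ a * κ a = ε * μ a * κ a := by
          rw [hε]; field_simp; linarith [hsq]
        exact mul_right_cancel₀ ha this
      have : μ a * μ i = μ a * (ε * κ i) := by
        rw [← h1, hκμa]; ring
      exact mul_left_cancel₀ hμa this
  -- esymm scaling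
  have hscale : ∀ m : ℕ, esymmFun n m μ = ε ^ m * esymmFun n m κ := by
    intro m
    unfold esymmFun
    rw [Finset.mul_sum]
    apply Finset.sum_congr rfl
    intro T hT
    rw [Finset.mem_powersetCard] at hT
    calc ∏ i ∈ T, μ i = ∏ i ∈ T, ε * κ i := by
          exact Finset.prod_congr rfl fun i _ => hμ i
      _ = ε ^ m * ∏ i ∈ T, κ i := by
          rw [Finset.prod_mul_distrib, Finset.prod_const, hT.2]
  have hεodd : ε ^ (2 * k + 1) = ε := by
    rw [pow_succ, pow_mul, hε2, one_pow, one_mul]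
  have hε1 : ε = 1 := by
    have := heq
    rw [hscale, hεodd] at this
    have h0 : (ε - 1) * esymmFun n (2 * k + 1) κ = 0 := by linarith
    rcases mul_eq_zero.mp h0 with h' | h'
    · linarith
    · exact absurd h' hne
  have hκμ : κ = μ := by
    funext i
    rw [hμ i, hε1, one_mul]
  exact ⟨hκμ, fun l => by rw [hκμ]⟩
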